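/- Suppose q : [0, T] → ℝ is differentiable, satisfies q′(t) = ρ − pK − p·Φ(q(t)) for all t ∈ [0, T], and q(T) = 0. Define c*(t) = min( c̄, max( c̲, λ^{1/(1−p)}·e^{q(t)/(p−1)} ) ) for t ∈ [0, T]. If c̄ < λ^{1/(1−p)}, then c* is nondecreasing on [0, T]. -/

import Mathlib

open Set Filter Topology

/-- limit point of a set where q equals w, q continuous there, then q c = w. -/
lemma helperH {q : ℝ → ℝ} {S : Set ℝ} {w c : ℝ} (hc : c ∈ closure S)
    (hcont : ContinuousAt q c) (hw : ∀ x ∈ S, q x = w) : q c = w := by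
  have h1 : (𝓝[S] c).NeBot := mem_closure_iff_nhdsWithin_neBot.mp hc
  have h2 : Tendsto q (𝓝[S] c) (𝓝 (q c)) := (hcont.continuousWithinAt).tendsto
  have h3 : Tendsto q (𝓝[S] c) (𝓝 w) := by
    apply Tendsto.congr' _ tendsto_const_nhds
    filter_upwards [self_mem_nhdsWithin] with x hx using (hw x hx).symm
  exact tendsto_nhds_unique h2 h3

lemma cross_up {q G : ℝ → ℝ} {a b w : ℝ} (hab : a ≤ b)
    (hd : ∀ x ∈ Set.Icc a b, HasDerivAt q (G (q x)) x)
    (ha : q a < w) (hb : w < q b) : 0 ≤ G w := by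
  have hcont : ContinuousOn q (Set.Icc a b) :=
    fun x hx => ((hd x hx).continuousAt).continuousWithinAt
  set S : Set ℝ := {x | x ∈ Set.Icc a b ∧ q x = w} with hSdef
  have hS : S.Nonempty := by
    obtain ⟨c, hc, hcw⟩ := intermediate_value_Icc hab hcont ⟨ha.le, hb.le⟩
    exact ⟨c, hc, hcw⟩
  have hbdd : BddAbove S := ⟨b, fun x hx => hx.1.2⟩
  set c := sSup S with hcdef
  have hcS : c ∈ closure S := csSup_mem_closure hS hbdd
  have hcab : c ∈ Set.Icc a b := by
    have h' : closure S ⊆ closure (Set.Icc a b) := closure_mono (fun x hx => hx.1)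
    rw [isClosed_Icc.closure_eq] at h'
    exact h' hcS
  have hqc : q c = w := helperH hcS (hd c hcab).continuousAt (fun x hx => hx.2)
  have hcb : c < b := by
    rcases lt_or_eq_of_le hcab.2 with h | h
    · exact h
    · exfalso; rw [h] at hqc; rw [hqc] at hb; exact lt_irrefl _ hb
  have hfwd : ∀ y ∈ Set.Ioc c b, w < q y := by
    intro y hy
    rcases lt_trichotomy (q y) w with h | h | h
    · exfalso
      have hyab : y ∈ Set.Icc a b := ⟨hcab.1.trans hy.1.le, hy.2⟩
      obtain ⟨z, hz, hzw⟩ := intermediate_value_Icc hy.2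
        (hcont.mono (Set.Icc_subset_Icc hyab.1 le_rfl)) ⟨h.le, hb.le⟩
      have hzS : z ∈ S := ⟨⟨hyab.1.trans hz.1, hz.2⟩, hzw⟩
      have := le_csSup hbdd hzS
      have : y ≤ c := hz.1.trans this
      exact absurd hy.1 (not_lt.mpr this)
    · exfalso
      have hyS : y ∈ S := ⟨⟨hcab.1.trans hy.1.le, hy.2⟩, h⟩
      exact absurd hy.1 (not_lt.mpr (le_csSup hbdd hyS))
    · exact h
  have hder := hd c hcab
  have hslope : Tendsto (slope q c) (𝓝[>] c) (𝓝 (G (q c))) :=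
    (hasDerivAt_iff_tendsto_slope.mp hder).mono_left
      (nhdsWithin_mono c (fun x hx => ne_of_gt hx))
  have h0 : 0 ≤ G (q c) := by
    refine ge_of_tendsto hslope ?_
    filter_upwards [Ioo_mem_nhdsGT_of_mem ⟨le_refl c, hcb⟩] with y hy
    have h1 : w < q y := hfwd y ⟨hy.1, hy.2.le⟩
    have h2 : c < y := hy.1
    rw [slope_def_field]
    apply div_nonneg
    · rw [hqc] at *; linarith
    · linarith
  rwa [hqc] at h0

lemma cross_down {q G : ℝ → ℝ} {a b w : ℝ} (hab : a ≤ b)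
    (hd : ∀ x ∈ Set.Icc a b, HasDerivAt q (G (q x)) x)
    (ha : w < q a) (hb : q b < w) : G w ≤ 0 := by
  have := cross_up (q := fun t => -q t) (G := fun x => -G (-x)) (w := -w) hab
    (fun x hx => by have := (hd x hx).neg; simp only [neg_neg] at this ⊢; exact this) (by simpa) (by simpa)
  simpa using this

lemma const_forward {q G : ℝ → ℝ} {τ b l u : ℝ} (hτb : τ ≤ b)
    (hd : ∀ x ∈ Set.Icc τ b, HasDerivAt q (G (q x)) x)
    (hG : ∀ x, l < x → x < u → G x = 0)
    (hql : l < q τ) (hqu : q τ < u) : q b = q τ := by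
  set w := q τ with hwdef
  set A : Set ℝ := {x | x ∈ Set.Icc τ b ∧ ∀ y ∈ Set.Icc τ x, q y = w} with hAdef
  have hτA : τ ∈ A := ⟨⟨le_refl _, hτb⟩, fun y hy => by
    have : y = τ := le_antisymm hy.2 hy.1
    rw [this]⟩
  have hAne : A.Nonempty := ⟨τ, hτA⟩
  have hbdd : BddAbove A := ⟨b, fun x hx => hx.1.2⟩
  set m := sSup A with hmdef
  have hτm : τ ≤ m := le_csSup hbdd hτA
  have hmb : m ≤ b := csSup_le hAne (fun x hx => hx.1.2)
  have hmmem : m ∈ Set.Icc τ b := ⟨hτm, hmb⟩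
  have hqm : ∀ y ∈ Set.Icc τ m, q y = w := by
    intro y hy
    rcases eq_or_lt_of_le hy.2 with h | h
    · have hclos : m ∈ closure A := csSup_mem_closure hAne hbdd
      have : q m = w := helperH hclos (hd m hmmem).continuousAt
        (fun x hx => hx.2 x ⟨hx.1.1, le_refl x⟩)
      rw [h]; exact this
    · obtain ⟨x, hxA, hyx⟩ := exists_lt_of_lt_csSup hAne h
      exact hxA.2 y ⟨hy.1, hyx.le⟩
  rcases eq_or_lt_of_le hmb with hmb' | hmb'
  · rw [← hmb']; exact hqm m ⟨hτm, le_refl m⟩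
  · exfalso
    have hqmw : q m = w := hqm m ⟨hτm, le_refl m⟩
    have hc : ContinuousAt q m := (hd m hmmem).continuousAt
    have hmem : q m ∈ Set.Ioo l u := by rw [hqmw]; exact ⟨hql, hqu⟩
    have hnhds : q ⁻¹' Set.Ioo l u ∈ 𝓝 m := hc (isOpen_Ioo.mem_nhds hmem)
    obtain ⟨ε, hε, hball⟩ := Metric.mem_nhds_iff.mp hnhds
    set b' := min (m + ε / 2) b with hb'def
    have hmb'' : m < b' := lt_min (by linarith) hmb'
    have hb'b : b' ≤ b := min_le_right _ _
    have hconst : ∀ x ∈ Set.Icc m b', q x = q m := by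
      apply constant_of_has_deriv_right_zero
      · intro x hx
        have hxmem : x ∈ Set.Icc τ b := ⟨hτm.trans hx.1, hx.2.trans hb'b⟩
        exact ((hd x hxmem).continuousAt).continuousWithinAt
      · intro x hx
        have hxmem : x ∈ Set.Icc τ b := ⟨hτm.trans hx.1, hx.2.le.trans hb'b⟩
        have hxball : x ∈ Metric.ball m ε := by
          rw [Metric.mem_ball, Real.dist_eq, abs_lt]
          constructor
          · have := hx.1; linarith
          · have := hx.2.trans_le (min_le_left _ _); linarith
        have hqx : q x ∈ Set.Ioo l u := hball hxball
        have hG0 : G (q x) = 0 := hG (q x) hqx.1 hqx.2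
        have := hd x hxmem
        rw [hG0] at this
        exact this.hasDerivWithinAt
    have hb'A : b' ∈ A := by
      refine ⟨⟨hτm.trans hmb''.le, hb'b⟩, fun y hy => ?_⟩
      rcases le_total y m with h' | h'
      · exact hqm y ⟨hy.1, h'⟩
      · rw [hconst y ⟨h', hy.2⟩, hqmw]
    have := le_csSup hbdd hb'A
    linarith

lemma no_increase_above {G q : ℝ → ℝ} {T : ℝ}
    (hd : ∀ x ∈ Set.Icc (0:ℝ) T, HasDerivAt q (G (q x)) x) (hqT : q T = 0)
    {s t : ℝ} (hs : s ∈ Set.Icc (0:ℝ) T) (ht : t ∈ Set.Icc (0:ℝ) T)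
    (hst : s ≤ t) (hq : q s < q t) : q t ≤ 0 := by
  by_contra hpos
  push_neg at hpos
  have htT : t < T := by
    rcases lt_or_eq_of_le ht.2 with h | h
    · exact h
    · exfalso; rw [h, hqT] at hpos; exact lt_irrefl _ hpos
  set l := max (q s) 0 with hldef
  have hl : l < q t := max_lt hq hpos
  have hG0 : ∀ x, l < x → x < q t → G x = 0 := by
    intro x h1 h2
    have hup : 0 ≤ G x := cross_up hst
      (fun y hy => hd y ⟨hs.1.trans hy.1, hy.2.trans ht.2⟩)
      (lt_of_le_of_lt (le_max_left _ _) h1) h2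
    have hdn : G x ≤ 0 := cross_down htT.le
      (fun y hy => hd y ⟨ht.1.trans hy.1, hy.2⟩)
      h2 (by rw [hqT]; exact lt_of_le_of_lt (le_max_right _ _) h1)
    linarith
  set w0 := (l + q t) / 2 with hw0def
  have hw0l : l < w0 := by simp only [hw0def]; linarith
  have hw0u : w0 < q t := by simp only [hw0def]; linarith
  have hw0pos : 0 < w0 := lt_of_le_of_lt (le_max_right _ _) hw0l
  have hcont : ContinuousOn q (Set.Icc t T) :=
    fun x hx => ((hd x ⟨ht.1.trans hx.1, hx.2⟩).continuousAt).continuousWithinAt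
  obtain ⟨τ, hτ, hqτ⟩ := intermediate_value_Icc' htT.le hcont
    (⟨by rw [hqT]; exact hw0pos.le, hw0u.le⟩ : w0 ∈ Set.Icc (q T) (q t))
  have hkey : q T = q τ := const_forward hτ.2
    (fun y hy => hd y ⟨(ht.1.trans hτ.1).trans hy.1, hy.2⟩)
    hG0 (by rw [hqτ]; exact hw0l) (by rw [hqτ]; exact hw0u)
  rw [hqT, hqτ] at hkey
  linarith


/-- If `c̄ < λ^{1/(1-p)}`, the optimal consumption `c*` is nondecreasing on `[0, T]`. -/
theorem power_consumption_nondecreasing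
    (T ρ K lam clo chi p : ℝ) (hT : 0 < T) (hρ : 0 ≤ ρ)
    (hlam : 0 < lam) (hclo : 0 < clo) (hc : clo < chi)
    (hp1 : p < 1) (hp0 : p ≠ 0)
    (Φ : ℝ → ℝ)
    (hΦ : ∀ x : ℝ, Φ x =
      if x < (p - 1) * Real.log chi + Real.log lam then
        lam / p * chi ^ p * Real.exp (-x) - chi
      else if x ≤ (p - 1) * Real.log clo + Real.log lam then
        (1 - p) / p * lam ^ (1 / (1 - p)) * Real.exp (x / (p - 1))
      else
        lam / p * clo ^ p * Real.exp (-x) - clo)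
    (q : ℝ → ℝ)
    (hq : ∀ t ∈ Set.Icc (0 : ℝ) T, HasDerivAt q (ρ - p * K - p * Φ (q t)) t)
    (hqT : q T = 0)
    (cstar : ℝ → ℝ)
    (hcstar : ∀ t : ℝ,
      cstar t = min chi (max clo (lam ^ (1 / (1 - p)) * Real.exp (q t / (p - 1)))))
    (hcase : chi < lam ^ (1 / (1 - p))) :
    MonotoneOn cstar (Set.Icc 0 T) := by
  have hd : ∀ x ∈ Set.Icc (0:ℝ) T,
      HasDerivAt q ((fun y => ρ - p * K - p * Φ y) (q x)) x := hq
  intro s hs t ht hst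
  rw [hcstar s, hcstar t]
  have hA0 : (0:ℝ) < lam ^ (1 / (1 - p)) := Real.rpow_pos_of_pos hlam _
  have hp1' : p - 1 < 0 := by linarith
  by_cases h : q t ≤ q s
  · have hdiv : q s / (p - 1) ≤ q t / (p - 1) := by
      rw [div_eq_mul_inv, div_eq_mul_inv]
      exact mul_le_mul_of_nonpos_right h (inv_nonpos.mpr hp1'.le)
    gcongr
  · push_neg at h
    have h2 : q t ≤ 0 := no_increase_above (G := fun y => ρ - p * K - p * Φ y) hd hqT hs ht hst h
    have key : ∀ x : ℝ, x ≤ 0 →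
        min chi (max clo (lam ^ (1 / (1 - p)) * Real.exp (x / (p - 1)))) = chi := by
      intro x hx
      have h1 : (1:ℝ) ≤ Real.exp (x / (p - 1)) :=
        Real.one_le_exp (by rw [div_nonneg_iff]; exact Or.inr ⟨hx, hp1'.le⟩)
      have h2' : chi ≤ lam ^ (1 / (1 - p)) * Real.exp (x / (p - 1)) := by nlinarith
      exact min_eq_left (le_max_of_le_right h2')
    rw [key (q s) (by linarith), key (q t) h2]
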